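/- The function E^L: ℝ³ → ℝ given by E^L(x) = (2π/L³) Σ_{k∈(2π/L)ℤ³, k≠0} (e^{−|k|²/(4ξ²)}/|k|²) | q_m e^{i k·x} + Σ_{ν≠m} q_ν e^{i k·x_ν} |² is differentiable at every x, and its gradient at x = x_m equals ∇E^L(x_m) = −(4π q_m/L³) Σ_{k∈(2π/L)ℤ³, k≠0} (e^{−|k|²/(4ξ²)}/|k|²) ( Σ_{ν=1}^N q_ν sin(k·(x_m − x_ν)) ) k. Consequently the Fourier-space Ewald force F^L(x_m) = −∇E^L(x_m) equals (4π q_m/L³) Σ_{k≠0} (e^{−|k|²/(4ξ²)}/|k|²) ( Σ_ν q_ν sin(k·(x_m − x_ν)) ) k. -/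

import Mathlib

open scoped Real RealInnerProductSpace

noncomputable section

/-- `ℝ³` with the Euclidean structure. -/
abbrev V3 := EuclideanSpace ℝ (Fin 3)

/-- The integer vector `n ∈ ℤ³` as an element of `ℝ³`. -/
def intVec (n : Fin 3 → ℤ) : V3 := WithLp.toLp 2 (fun i => (n i : ℝ))

/-- The wavevector `k_n = (2π/L) n`. -/
def kvec (L : ℝ) (n : Fin 3 → ℤ) : V3 := (2 * π / L) • intVec n

/-- The Fourier-space Ewald energy as a function of the position `y` of particle
`m`, all other particles held fixed:
`E^L(y) = (2π/L³) Σ_{k≠0} (e^{−|k|²/(4ξ²)}/|k|²) |q_m e^{ik·y} + Σ_{ν≠m} q_ν e^{ik·x_ν}|²`. -/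
def Efourier (L ξ : ℝ) (N : ℕ) (q : Fin N → ℝ) (x : Fin N → V3) (m : Fin N)
    (y : V3) : ℝ :=
  (2 * π / L ^ 3) * ∑' n : {n : Fin 3 → ℤ // n ≠ 0},
    (Real.exp (-‖kvec L ↑n‖ ^ 2 / (4 * ξ ^ 2)) / ‖kvec L ↑n‖ ^ 2) *
      ‖(q m : ℂ) * Complex.exp (Complex.I * (⟪kvec L ↑n, y⟫ : ℝ)) +
        ∑ ν ∈ Finset.univ.erase m,
          (q ν : ℂ) * Complex.exp (Complex.I * (⟪kvec L ↑n, x ν⟫ : ℝ))‖ ^ 2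

/-! Auxiliary definitions -/

def eCoef (L ξ : ℝ) (n : {n : Fin 3 → ℤ // n ≠ 0}) : ℝ :=
  Real.exp (-‖kvec L ↑n‖ ^ 2 / (4 * ξ ^ 2)) / ‖kvec L ↑n‖ ^ 2

def fTerm (L ξ : ℝ) (N : ℕ) (q : Fin N → ℝ) (x : Fin N → V3) (m : Fin N)
    (n : {n : Fin 3 → ℤ // n ≠ 0}) (y : V3) : ℝ :=
  eCoef L ξ n *
    ‖((q m : ℂ) * Complex.exp (Complex.I * (⟪kvec L ↑n, y⟫ : ℝ)) +
      ∑ ν ∈ Finset.univ.erase m,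
        (q ν : ℂ) * Complex.exp (Complex.I * (⟪kvec L ↑n, x ν⟫ : ℝ)))‖ ^ 2

def fDeriv (L ξ : ℝ) (N : ℕ) (q : Fin N → ℝ) (x : Fin N → V3) (m : Fin N)
    (n : {n : Fin 3 → ℤ // n ≠ 0}) (y : V3) : V3 →L[ℝ] ℝ :=
  (eCoef L ξ n * (2 * q m * ∑ ν ∈ Finset.univ.erase m,
    q ν * -Real.sin (⟪kvec L ↑n, y - x ν⟫ : ℝ))) • innerSL ℝ (kvec L ↑n)

def wTerm (L ξ : ℝ) (N : ℕ) (q : Fin N → ℝ) (x : Fin N → V3) (m : Fin N)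
    (n : {n : Fin 3 → ℤ // n ≠ 0}) : V3 :=
  ((Real.exp (-‖kvec L ↑n‖ ^ 2 / (4 * ξ ^ 2)) / ‖kvec L ↑n‖ ^ 2) *
    ∑ ν, q ν * Real.sin (⟪kvec L ↑n, x m - x ν⟫ : ℝ)) • kvec L ↑n

/-! Auxiliary lemmas -/

lemma normsq_intVec (n : Fin 3 → ℤ) :
    ‖intVec n‖ ^ 2 = ∑ i, ((n i : ℝ)) ^ 2 := by
  rw [← real_inner_self_eq_norm_sq]
  rw [PiLp.inner_apply]
  simp [intVec, sq]

lemma one_le_norm_intVec {n : Fin 3 → ℤ} (hn : n ≠ 0) : 1 ≤ ‖intVec n‖ := by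
  obtain ⟨i, hi⟩ : ∃ i, n i ≠ 0 := by
    by_contra h
    push_neg at h
    exact hn (funext h)
  have h1 : (1 : ℝ) ≤ ((n i : ℝ)) ^ 2 := by
    have h0 : (1 : ℤ) ≤ |n i| := Int.one_le_abs hi
    have h2 : (1 : ℝ) ≤ |(n i : ℝ)| := by
      rw [← Int.cast_abs]
      exact_mod_cast h0
    calc (1:ℝ) = 1 * 1 := by ring
      _ ≤ |(n i : ℝ)| * |(n i : ℝ)| := mul_le_mul h2 h2 zero_le_one (abs_nonneg _)
      _ = ((n i : ℝ)) ^ 2 := by rw [abs_mul_abs_self]; ring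
  have h3 : (1 : ℝ) ≤ ‖intVec n‖ ^ 2 := by
    rw [normsq_intVec]
    exact h1.trans (Finset.single_le_sum (fun j _ => sq_nonneg ((n j : ℝ))) (Finset.mem_univ i))
  nlinarith [norm_nonneg (intVec n)]

lemma summable_exp_negsq_nat {a : ℝ} (ha : 0 < a) :
    Summable fun n : ℕ => Real.exp (-(a * (n : ℝ) ^ 2)) := by
  refine Summable.of_nonneg_of_le (fun n => (Real.exp_pos _).le) (fun n => ?_)
    (Real.summable_exp_nat_mul_iff.mpr (neg_lt_zero.mpr ha))
  rw [Real.exp_le_exp]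
  have h : (n : ℝ) ≤ (n : ℝ) ^ 2 := by
    have := Nat.le_self_pow (two_ne_zero) n
    exact_mod_cast this
  nlinarith

lemma summable_exp_negsq_int {a : ℝ} (ha : 0 < a) :
    Summable fun n : ℤ => Real.exp (-(a * (n : ℝ) ^ 2)) := by
  apply Summable.of_nat_of_neg <;> simpa using summable_exp_negsq_nat ha

lemma summable_gauss3 {a : ℝ} (ha : 0 < a) :
    Summable fun n : Fin 3 → ℤ => Real.exp (-(a * ‖intVec n‖ ^ 2)) := by
  have h1 := summable_exp_negsq_int ha
  have h2 := h1.mul_of_nonneg h1 (fun _ => (Real.exp_pos _).le) (fun _ => (Real.exp_pos _).le)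
  have h3 := h1.mul_of_nonneg h2 (fun _ => (Real.exp_pos _).le)
    (fun _ => mul_nonneg (Real.exp_pos _).le (Real.exp_pos _).le)
  set e : (Fin 3 → ℤ) ≃ ℤ × ℤ × ℤ :=
    (Fin.consEquiv fun _ => ℤ).symm.trans ((Equiv.refl ℤ).prodCongr (finTwoArrowEquiv ℤ)) with he
  refine (Equiv.summable_iff e.symm).mp ?_
  refine h3.congr fun p => ?_
  have hv : ∀ i : Fin 3, (e.symm p) i = ![p.1, p.2.1, p.2.2] i := by
    intro i
    fin_cases i <;> rfl
  simp only [Function.comp_apply, normsq_intVec, Fin.sum_univ_three, hv]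
  rw [show -(a * (((![p.1, p.2.1, p.2.2] 0 : ℤ) : ℝ) ^ 2 + ((![p.1, p.2.1, p.2.2] 1 : ℤ) : ℝ) ^ 2
      + ((![p.1, p.2.1, p.2.2] 2 : ℤ) : ℝ) ^ 2))
    = (-(a * (p.1 : ℝ) ^ 2)) + ((-(a * (p.2.1 : ℝ) ^ 2)) + (-(a * (p.2.2 : ℝ) ^ 2))) by
      simp [Matrix.cons_val_zero, Matrix.cons_val_one]; ring,
    Real.exp_add, Real.exp_add]

lemma summable_gauss_sub {a : ℝ} (ha : 0 < a) :
    Summable fun n : {n : Fin 3 → ℤ // n ≠ 0} =>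
      Real.exp (-(a * ‖intVec (↑n : Fin 3 → ℤ)‖ ^ 2)) :=
  (summable_gauss3 ha).comp_injective Subtype.val_injective

lemma exp_term_re (a b t s : ℝ) :
    ((((a : ℂ) * Complex.exp (Complex.I * t))) *
      (starRingEnd ℂ) ((b : ℂ) * Complex.exp (Complex.I * s))).re
      = a * b * Real.cos (t - s) := by
  have h : (((a : ℂ) * Complex.exp (Complex.I * t))) *
      (starRingEnd ℂ) ((b : ℂ) * Complex.exp (Complex.I * s))
      = ((a * b : ℝ) : ℂ) * Complex.exp (((t - s : ℝ) : ℂ) * Complex.I) := by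
    rw [map_mul, Complex.conj_ofReal, ← Complex.exp_conj]
    have h2 : (starRingEnd ℂ) (Complex.I * s) = -(Complex.I * s) := by simp
    rw [h2]
    rw [show ((a:ℂ) * Complex.exp (Complex.I * t)) * ((b:ℂ) * Complex.exp (-(Complex.I * s)))
      = ((a:ℂ) * b) * (Complex.exp (Complex.I * t) * Complex.exp (-(Complex.I * s))) by ring,
      ← Complex.exp_add]
    push_cast
    ring_nf
  rw [h, Complex.re_ofReal_mul, Complex.exp_ofReal_mul_I_re]

lemma abs_sq_expand {ι' : Type*} (s : Finset ι') (r t : ℝ) (b u : ι' → ℝ) :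
    ‖((r : ℂ) * Complex.exp (Complex.I * t) +
        ∑ ν ∈ s, (b ν : ℂ) * Complex.exp (Complex.I * (u ν)))‖ ^ 2
      = r ^ 2 + ‖(∑ ν ∈ s, (b ν : ℂ) * Complex.exp (Complex.I * (u ν)))‖ ^ 2
        + 2 * r * ∑ ν ∈ s, b ν * Real.cos (t - u ν) := by
  rw [Complex.sq_norm, Complex.sq_norm, Complex.normSq_add]
  have h1 : Complex.normSq ((r : ℂ) * Complex.exp (Complex.I * t)) = r ^ 2 := by
    rw [Complex.normSq_mul, Complex.normSq_eq_norm_sq, Complex.normSq_eq_norm_sq, Complex.norm_exp]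
    simp [sq_abs, sq]
  have h2 : (((r : ℂ) * Complex.exp (Complex.I * t)) *
      (starRingEnd ℂ) (∑ ν ∈ s, (b ν : ℂ) * Complex.exp (Complex.I * (u ν)))).re
      = r * ∑ ν ∈ s, b ν * Real.cos (t - u ν) := by
    rw [map_sum, Finset.mul_sum, Complex.re_sum, Finset.mul_sum]
    exact Finset.sum_congr rfl fun ν _ => by rw [exp_term_re]; ring
  rw [h1, h2]; ring

lemma abs_exp_sum_le {N : ℕ} (q : Fin N → ℝ) (s : Finset (Fin N)) (u : Fin N → ℝ) :
    ‖(∑ ν ∈ s, (q ν : ℂ) * Complex.exp (Complex.I * (u ν : ℝ)))‖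
      ≤ ∑ ν ∈ s, |q ν| := by
  calc ‖(∑ ν ∈ s, (q ν : ℂ) * Complex.exp (Complex.I * (u ν : ℝ)))‖
      ≤ ∑ ν ∈ s, ‖((q ν : ℂ) * Complex.exp (Complex.I * (u ν : ℝ)))‖ := by
        exact norm_sum_le s _
    _ = ∑ ν ∈ s, |q ν| := by
        refine Finset.sum_congr rfl fun ν _ => ?_
        rw [norm_mul, Complex.norm_real, Real.norm_eq_abs, Complex.norm_exp]
        have : (Complex.I * (u ν : ℂ)).re = 0 := by simp
        rw [this, Real.exp_zero, mul_one]
/-- The Fourier-space Ewald energy `E^L` is differentiable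
everywhere, and its gradient at `x_m` is
`∇E^L(x_m) = −(4πq_m/L³) Σ_{k≠0} (e^{−|k|²/(4ξ²)}/|k|²)(Σ_ν q_ν sin(k·(x_m−x_ν))) k`;
consequently the Fourier-space Ewald force `F^L(x_m) = −∇E^L(x_m)` equals
`(4πq_m/L³) Σ_{k≠0} (e^{−|k|²/(4ξ²)}/|k|²)(Σ_ν q_ν sin(k·(x_m−x_ν))) k`. -/
theorem Efourier_gradient (L ξ : ℝ) (hL : 0 < L) (hξ : 0 < ξ)
    (N : ℕ) (q : Fin N → ℝ) (x : Fin N → V3) (m : Fin N) :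
    (∀ y : V3, DifferentiableAt ℝ (Efourier L ξ N q x m) y) ∧
    HasGradientAt (Efourier L ξ N q x m)
      (-((4 * π * q m / L ^ 3) •
        ∑' n : {n : Fin 3 → ℤ // n ≠ 0},
          ((Real.exp (-‖kvec L ↑n‖ ^ 2 / (4 * ξ ^ 2)) / ‖kvec L ↑n‖ ^ 2) *
            ∑ ν, q ν * Real.sin (⟪kvec L ↑n, x m - x ν⟫ : ℝ)) • kvec L ↑n))
      (x m) := by
  classical
  have hπ : (0:ℝ) < π := Real.pi_pos
  set a : ℝ := (2 * π / L) ^ 2 / (4 * ξ ^ 2) with ha_def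
  have ha : 0 < a := by positivity
  have hE : Efourier L ξ N q x m
      = fun y => (2 * π / L ^ 3) * ∑' n : {n : Fin 3 → ℤ // n ≠ 0}, fTerm L ξ N q x m n y := rfl
  -- norms of wavevectors
  have hknorm : ∀ n : {n : Fin 3 → ℤ // n ≠ 0},
      ‖kvec L (↑n : Fin 3 → ℤ)‖ = (2 * π / L) * ‖intVec ↑n‖ := by
    intro n
    rw [kvec, norm_smul, Real.norm_eq_abs, abs_of_pos (by positivity)]
  have hIn : ∀ n : {n : Fin 3 → ℤ // n ≠ 0}, 1 ≤ ‖intVec (↑n : Fin 3 → ℤ)‖ :=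
    fun n => one_le_norm_intVec n.2
  have hkl : ∀ n : {n : Fin 3 → ℤ // n ≠ 0}, 2 * π / L ≤ ‖kvec L (↑n : Fin 3 → ℤ)‖ := by
    intro n
    rw [hknorm n]
    calc 2 * π / L = (2 * π / L) * 1 := (mul_one _).symm
      _ ≤ (2 * π / L) * ‖intVec (↑n : Fin 3 → ℤ)‖ := by
          apply mul_le_mul_of_nonneg_left (hIn n)
          positivity
  have hkpos : ∀ n : {n : Fin 3 → ℤ // n ≠ 0}, 0 < ‖kvec L (↑n : Fin 3 → ℤ)‖ := fun n =>
    lt_of_lt_of_le (by positivity) (hkl n)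
  have hexp : ∀ n : {n : Fin 3 → ℤ // n ≠ 0},
      Real.exp (-‖kvec L (↑n : Fin 3 → ℤ)‖ ^ 2 / (4 * ξ ^ 2))
      = Real.exp (-(a * ‖intVec (↑n : Fin 3 → ℤ)‖ ^ 2)) := by
    intro n
    congr 1
    rw [hknorm n, ha_def]
    field_simp
  have hεnn : ∀ n : {n : Fin 3 → ℤ // n ≠ 0}, 0 ≤ eCoef L ξ n := fun n => by
    rw [eCoef]; positivity
  have hεeq : ∀ n : {n : Fin 3 → ℤ // n ≠ 0},
      eCoef L ξ n = Real.exp (-(a * ‖intVec (↑n : Fin 3 → ℤ)‖ ^ 2)) / ‖kvec L ↑n‖ ^ 2 := by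
    intro n
    rw [eCoef, hexp n]
  have hεk : ∀ n : {n : Fin 3 → ℤ // n ≠ 0}, eCoef L ξ n * ‖kvec L (↑n : Fin 3 → ℤ)‖
      ≤ (L / (2 * π)) * Real.exp (-(a * ‖intVec (↑n : Fin 3 → ℤ)‖ ^ 2)) := by
    intro n
    have hknz := (hkpos n).ne'
    have h0 : eCoef L ξ n * ‖kvec L (↑n : Fin 3 → ℤ)‖
        = Real.exp (-(a * ‖intVec (↑n : Fin 3 → ℤ)‖ ^ 2)) / ‖kvec L ↑n‖ := by
      rw [hεeq n]
      field_simp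
    rw [h0, div_le_iff₀ (hkpos n)]
    have h1 : (L / (2 * π)) * Real.exp (-(a * ‖intVec (↑n : Fin 3 → ℤ)‖ ^ 2)) * (2 * π / L)
        ≤ (L / (2 * π)) * Real.exp (-(a * ‖intVec (↑n : Fin 3 → ℤ)‖ ^ 2)) * ‖kvec L ↑n‖ :=
      mul_le_mul_of_nonneg_left (hkl n) (by positivity)
    have h2 : (L / (2 * π)) * Real.exp (-(a * ‖intVec (↑n : Fin 3 → ℤ)‖ ^ 2)) * (2 * π / L)
        = Real.exp (-(a * ‖intVec (↑n : Fin 3 → ℤ)‖ ^ 2)) := by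
      field_simp
    linarith
  have hεb : ∀ n : {n : Fin 3 → ℤ // n ≠ 0},
      eCoef L ξ n ≤ (L / (2 * π)) ^ 2 * Real.exp (-(a * ‖intVec (↑n : Fin 3 → ℤ)‖ ^ 2)) := by
    intro n
    rw [hεeq n, div_le_iff₀ (pow_pos (hkpos n) 2)]
    have hsq : (2 * π / L) ^ 2 ≤ ‖kvec L (↑n : Fin 3 → ℤ)‖ ^ 2 :=
      pow_le_pow_left₀ (by positivity) (hkl n) 2
    have h1 : (L / (2 * π)) ^ 2 * Real.exp (-(a * ‖intVec (↑n : Fin 3 → ℤ)‖ ^ 2)) * (2 * π / L) ^ 2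
        ≤ (L / (2 * π)) ^ 2 * Real.exp (-(a * ‖intVec (↑n : Fin 3 → ℤ)‖ ^ 2)) * ‖kvec L ↑n‖ ^ 2 :=
      mul_le_mul_of_nonneg_left hsq (by positivity)
    have h2 : (L / (2 * π)) ^ 2 * Real.exp (-(a * ‖intVec (↑n : Fin 3 → ℤ)‖ ^ 2)) * (2 * π / L) ^ 2
        = Real.exp (-(a * ‖intVec (↑n : Fin 3 → ℤ)‖ ^ 2)) := by
      field_simp
    linarith
  -- charge bounds
  set Q : ℝ := ∑ ν, |q ν| with hQ
  have hQ0 : 0 ≤ Q := Finset.sum_nonneg fun ν _ => abs_nonneg _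
  have hqm : |q m| ≤ Q := Finset.single_le_sum (fun ν _ => abs_nonneg (q ν)) (Finset.mem_univ m)
  have hQe : ∀ (g : Fin N → ℝ), (∀ ν, |g ν| ≤ |q ν|) →
      |∑ ν ∈ Finset.univ.erase m, g ν| ≤ Q := by
    intro g hg
    calc |∑ ν ∈ Finset.univ.erase m, g ν| ≤ ∑ ν ∈ Finset.univ.erase m, |g ν| :=
          Finset.abs_sum_le_sum_abs _ _
      _ ≤ ∑ ν ∈ Finset.univ.erase m, |q ν| := Finset.sum_le_sum fun ν _ => hg ν
      _ ≤ Q := Finset.sum_le_sum_of_subset_of_nonneg (Finset.erase_subset _ _)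
          (fun ν _ _ => abs_nonneg _)
  -- rewrite fTerm in real terms
  have hfg : ∀ (n : {n : Fin 3 → ℤ // n ≠ 0}) (y : V3), fTerm L ξ N q x m n y
      = eCoef L ξ n * ((q m) ^ 2 +
      ‖(∑ ν ∈ Finset.univ.erase m,
        (q ν : ℂ) * Complex.exp (Complex.I * (⟪kvec L ↑n, x ν⟫ : ℝ)))‖ ^ 2 +
      2 * q m * ∑ ν ∈ Finset.univ.erase m, q ν * Real.cos (⟪kvec L ↑n, y - x ν⟫ : ℝ)) := by
    intro n y
    rw [fTerm, abs_sq_expand]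
    rw [show (∑ ν ∈ Finset.univ.erase m,
        q ν * Real.cos ((⟪kvec L ↑n, y⟫ : ℝ) - (⟪kvec L ↑n, x ν⟫ : ℝ)))
        = ∑ ν ∈ Finset.univ.erase m, q ν * Real.cos (⟪kvec L ↑n, y - x ν⟫ : ℝ) from
      Finset.sum_congr rfl fun ν _ => by rw [inner_sub_right]]
  have hder : ∀ (n : {n : Fin 3 → ℤ // n ≠ 0}) (y : V3),
      HasFDerivAt (fTerm L ξ N q x m n) (fDeriv L ξ N q x m n y) y := by
    intro n y
    have hcos : ∀ ν : Fin N, HasFDerivAt (fun z : V3 => Real.cos (⟪kvec L ↑n, z - x ν⟫ : ℝ))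
        ((-Real.sin (⟪kvec L ↑n, y - x ν⟫ : ℝ)) • innerSL ℝ (kvec L ↑n)) y := by
      intro ν
      have h1 : HasFDerivAt (fun z : V3 => (⟪kvec L ↑n, z⟫ : ℝ) - ⟪kvec L ↑n, x ν⟫)
          (innerSL ℝ (kvec L ↑n)) y :=
        ((innerSL ℝ (kvec L ↑n)).hasFDerivAt).sub_const _
      have h2 := (Real.hasDerivAt_cos
        ((⟪kvec L ↑n, y⟫ : ℝ) - ⟪kvec L ↑n, x ν⟫)).comp_hasFDerivAt y h1
      simp only [← inner_sub_right] at h2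
      exact h2
    have hsum : HasFDerivAt
        (fun z : V3 => ∑ ν ∈ Finset.univ.erase m, q ν * Real.cos (⟪kvec L ↑n, z - x ν⟫ : ℝ))
        (∑ ν ∈ Finset.univ.erase m,
          q ν • ((-Real.sin (⟪kvec L ↑n, y - x ν⟫ : ℝ)) • innerSL ℝ (kvec L ↑n))) y :=
      HasFDerivAt.fun_sum fun ν _ => (hcos ν).const_mul (q ν)
    have h3 := ((hsum.const_mul (2 * q m)).const_add
      ((q m) ^ 2 + ‖(∑ ν ∈ Finset.univ.erase m,
        (q ν : ℂ) * Complex.exp (Complex.I * (⟪kvec L ↑n, x ν⟫ : ℝ)))‖ ^ 2)).const_mul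
        (eCoef L ξ n)
    have hfeq : fTerm L ξ N q x m n = fun y : V3 => eCoef L ξ n * ((q m) ^ 2 +
        ‖(∑ ν ∈ Finset.univ.erase m,
          (q ν : ℂ) * Complex.exp (Complex.I * (⟪kvec L ↑n, x ν⟫ : ℝ)))‖ ^ 2 +
        2 * q m * ∑ ν ∈ Finset.univ.erase m, q ν * Real.cos (⟪kvec L ↑n, y - x ν⟫ : ℝ)) :=
      funext (hfg n)
    rw [hfeq]
    refine h3.congr_fderiv (Eq.symm ?_)
    refine ContinuousLinearMap.ext fun w => ?_
    simp only [fDeriv, ContinuousLinearMap.smul_apply, ContinuousLinearMap.coe_smul',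
      Pi.smul_apply, ContinuousLinearMap.coe_sum', Finset.sum_apply, smul_eq_mul,
      Finset.mul_sum, Finset.sum_mul]
    refine Finset.sum_congr rfl fun ν _ => ?_
    ring
  -- the uniform bound
  have hbound : ∀ (n : {n : Fin 3 → ℤ // n ≠ 0}) (y : V3), ‖fDeriv L ξ N q x m n y‖
      ≤ (2 * Q * Q * (L / (2 * π))) * Real.exp (-(a * ‖intVec (↑n : Fin 3 → ℤ)‖ ^ 2)) := by
    intro n y
    rw [fDeriv]
    refine le_trans (norm_smul_le (eCoef L ξ n * (2 * q m * ∑ ν ∈ Finset.univ.erase m,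
      q ν * -Real.sin (⟪kvec L ↑n, y - x ν⟫ : ℝ))) (innerSL ℝ (kvec L ↑n))) ?_
    rw [Real.norm_eq_abs, innerSL_apply_norm]
    have hS : |∑ ν ∈ Finset.univ.erase m, q ν * -Real.sin (⟪kvec L ↑n, y - x ν⟫ : ℝ)| ≤ Q := by
      apply hQe
      intro ν
      rw [abs_mul, abs_neg]
      calc |q ν| * |Real.sin (⟪kvec L ↑n, y - x ν⟫ : ℝ)| ≤ |q ν| * 1 := by
            apply mul_le_mul_of_nonneg_left _ (abs_nonneg _)
            exact abs_le.mpr ⟨Real.neg_one_le_sin _, Real.sin_le_one _⟩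
        _ = |q ν| := mul_one _
    calc |eCoef L ξ n * (2 * q m * ∑ ν ∈ Finset.univ.erase m,
          q ν * -Real.sin (⟪kvec L ↑n, y - x ν⟫ : ℝ))| * ‖kvec L ↑n‖
        ≤ (eCoef L ξ n * (2 * Q * Q)) * ‖kvec L ↑n‖ := by
          apply mul_le_mul_of_nonneg_right _ (norm_nonneg _)
          rw [abs_mul, abs_of_nonneg (hεnn n)]
          apply mul_le_mul_of_nonneg_left _ (hεnn n)
          rw [abs_mul]
          calc |2 * q m| * |∑ ν ∈ Finset.univ.erase m,
              q ν * -Real.sin (⟪kvec L ↑n, y - x ν⟫ : ℝ)|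
              ≤ (2 * Q) * Q := by
                apply mul_le_mul _ hS (abs_nonneg _) (by positivity)
                rw [abs_mul, abs_two]
                nlinarith [hqm, abs_nonneg (q m)]
            _ = 2 * Q * Q := by ring
      _ = (2 * Q * Q) * (eCoef L ξ n * ‖kvec L ↑n‖) := by ring
      _ ≤ (2 * Q * Q) * ((L / (2 * π)) * Real.exp (-(a * ‖intVec (↑n : Fin 3 → ℤ)‖ ^ 2))) :=
          mul_le_mul_of_nonneg_left (hεk n) (by positivity)
      _ = (2 * Q * Q * (L / (2 * π))) * Real.exp (-(a * ‖intVec (↑n : Fin 3 → ℤ)‖ ^ 2)) := by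
          ring
  have hu : Summable fun n : {n : Fin 3 → ℤ // n ≠ 0} =>
      (2 * Q * Q * (L / (2 * π))) * Real.exp (-(a * ‖intVec (↑n : Fin 3 → ℤ)‖ ^ 2)) :=
    (summable_gauss_sub ha).mul_left _
  -- summability at the base point
  have hf0 : Summable fun n : {n : Fin 3 → ℤ // n ≠ 0} => fTerm L ξ N q x m n (x m) := by
    refine Summable.of_nonneg_of_le (fun n => ?_) (fun n => ?_)
      (((summable_gauss_sub ha).mul_left ((2 * Q) ^ 2 * (L / (2 * π)) ^ 2)))
    · rw [fTerm]
      have := hεnn n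
      positivity
    · rw [fTerm]
      have habs : ‖((q m : ℂ) * Complex.exp (Complex.I * (⟪kvec L ↑n, x m⟫ : ℝ)) +
          ∑ ν ∈ Finset.univ.erase m,
            (q ν : ℂ) * Complex.exp (Complex.I * (⟪kvec L ↑n, x ν⟫ : ℝ)))‖ ≤ 2 * Q := by
        calc ‖((q m : ℂ) * Complex.exp (Complex.I * (⟪kvec L ↑n, x m⟫ : ℝ)) +
            ∑ ν ∈ Finset.univ.erase m,
              (q ν : ℂ) * Complex.exp (Complex.I * (⟪kvec L ↑n, x ν⟫ : ℝ)))‖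
            ≤ ‖((q m : ℂ) * Complex.exp (Complex.I * (⟪kvec L ↑n, x m⟫ : ℝ)))‖ +
              ‖(∑ ν ∈ Finset.univ.erase m,
                (q ν : ℂ) * Complex.exp (Complex.I * (⟪kvec L ↑n, x ν⟫ : ℝ)))‖ :=
              norm_add_le _ _
          _ ≤ Q + Q := by
              apply add_le_add
              · rw [norm_mul, Complex.norm_real, Real.norm_eq_abs, Complex.norm_exp]
                have h0 : (Complex.I * ((⟪kvec L ↑n, x m⟫ : ℝ) : ℂ)).re = 0 := by simp
                rw [h0, Real.exp_zero, mul_one]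
                exact hqm
              · calc ‖(∑ ν ∈ Finset.univ.erase m,
                    (q ν : ℂ) * Complex.exp (Complex.I * (⟪kvec L ↑n, x ν⟫ : ℝ)))‖
                    ≤ ∑ ν ∈ Finset.univ.erase m, |q ν| := abs_exp_sum_le q _ _
                  _ ≤ Q := Finset.sum_le_sum_of_subset_of_nonneg (Finset.erase_subset _ _)
                      (fun ν _ _ => abs_nonneg _)
          _ = 2 * Q := by ring
      calc eCoef L ξ n * ‖((q m : ℂ) *
            Complex.exp (Complex.I * (⟪kvec L ↑n, x m⟫ : ℝ)) +
            ∑ ν ∈ Finset.univ.erase m,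
              (q ν : ℂ) * Complex.exp (Complex.I * (⟪kvec L ↑n, x ν⟫ : ℝ)))‖ ^ 2
          ≤ eCoef L ξ n * (2 * Q) ^ 2 := by
            apply mul_le_mul_of_nonneg_left _ (hεnn n)
            exact pow_le_pow_left₀ (norm_nonneg _) habs 2
        _ ≤ ((L / (2 * π)) ^ 2 * Real.exp (-(a * ‖intVec (↑n : Fin 3 → ℤ)‖ ^ 2))) * (2 * Q) ^ 2 :=
            mul_le_mul_of_nonneg_right (hεb n) (by positivity)
        _ = (2 * Q) ^ 2 * (L / (2 * π)) ^ 2 * Real.exp (-(a * ‖intVec (↑n : Fin 3 → ℤ)‖ ^ 2)) := by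
            ring
  -- differentiate under the sum
  have hFD : ∀ y : V3, HasFDerivAt
      (fun z : V3 => ∑' n : {n : Fin 3 → ℤ // n ≠ 0}, fTerm L ξ N q x m n z)
      (∑' n : {n : Fin 3 → ℤ // n ≠ 0}, fDeriv L ξ N q x m n y) y :=
    fun y => hasFDerivAt_tsum hu hder hbound hf0 y
  have hdiff : ∀ y : V3, DifferentiableAt ℝ (Efourier L ξ N q x m) y := by
    intro y
    rw [hE]
    exact ((hFD y).const_mul (2 * π / L ^ 3)).differentiableAt
  refine ⟨hdiff, ?_⟩
  rw [hasGradientAt_iff_hasFDerivAt]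
  -- gradient identification
  have hwt : ∀ n : {n : Fin 3 → ℤ // n ≠ 0}, wTerm L ξ N q x m n
      = (eCoef L ξ n * ∑ ν, q ν * Real.sin (⟪kvec L ↑n, x m - x ν⟫ : ℝ)) • kvec L ↑n :=
    fun n => rfl
  have hSu : ∀ n : {n : Fin 3 → ℤ // n ≠ 0},
      |∑ ν, q ν * Real.sin (⟪kvec L ↑n, x m - x ν⟫ : ℝ)| ≤ Q := by
    intro n
    calc |∑ ν, q ν * Real.sin (⟪kvec L ↑n, x m - x ν⟫ : ℝ)|
        ≤ ∑ ν, |q ν * Real.sin (⟪kvec L ↑n, x m - x ν⟫ : ℝ)| := Finset.abs_sum_le_sum_abs _ _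
      _ ≤ ∑ ν, |q ν| := by
          refine Finset.sum_le_sum fun ν _ => ?_
          rw [abs_mul]
          calc |q ν| * |Real.sin (⟪kvec L ↑n, x m - x ν⟫ : ℝ)| ≤ |q ν| * 1 := by
                apply mul_le_mul_of_nonneg_left _ (abs_nonneg _)
                exact abs_le.mpr ⟨Real.neg_one_le_sin _, Real.sin_le_one _⟩
            _ = |q ν| := mul_one _
  have hwsum : Summable (wTerm L ξ N q x m) := by
    refine Summable.of_norm_bounded ((summable_gauss_sub ha).mul_left (Q * (L / (2 * π))))
      fun n => ?_
    rw [hwt n]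
    refine le_trans (norm_smul_le (eCoef L ξ n *
      ∑ ν, q ν * Real.sin (⟪kvec L ↑n, x m - x ν⟫ : ℝ)) (kvec L (↑n : Fin 3 → ℤ))) ?_
    rw [Real.norm_eq_abs, abs_mul, abs_of_nonneg (hεnn n)]
    calc eCoef L ξ n * |∑ ν, q ν * Real.sin (⟪kvec L ↑n, x m - x ν⟫ : ℝ)| * ‖kvec L ↑n‖
        ≤ eCoef L ξ n * Q * ‖kvec L ↑n‖ := by
          apply mul_le_mul_of_nonneg_right _ (norm_nonneg _)
          exact mul_le_mul_of_nonneg_left (hSu n) (hεnn n)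
      _ = Q * (eCoef L ξ n * ‖kvec L ↑n‖) := by ring
      _ ≤ Q * ((L / (2 * π)) * Real.exp (-(a * ‖intVec (↑n : Fin 3 → ℤ)‖ ^ 2))) :=
          mul_le_mul_of_nonneg_left (hεk n) hQ0
      _ = Q * (L / (2 * π)) * Real.exp (-(a * ‖intVec (↑n : Fin 3 → ℤ)‖ ^ 2)) := by ring
  have hstep : ∀ n : {n : Fin 3 → ℤ // n ≠ 0}, fDeriv L ξ N q x m n (x m)
      = (InnerProductSpace.toDual ℝ V3) ((-(2 * q m)) • wTerm L ξ N q x m n) := by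
    intro n
    refine ContinuousLinearMap.ext fun v => ?_
    have hz : q m * Real.sin (⟪kvec L ↑n, x m - x m⟫ : ℝ) = 0 := by simp
    have hsum2 : ∑ ν, q ν * Real.sin (⟪kvec L ↑n, x m - x ν⟫ : ℝ)
        = ∑ ν ∈ Finset.univ.erase m, q ν * Real.sin (⟪kvec L ↑n, x m - x ν⟫ : ℝ) :=
      (Finset.sum_erase (f := fun ν => q ν * Real.sin (⟪kvec L ↑n, x m - x ν⟫ : ℝ))
        Finset.univ hz).symm
    rw [fDeriv, hwt n]
    simp only [ContinuousLinearMap.smul_apply, innerSL_apply_apply, InnerProductSpace.toDual_apply_apply,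
      real_inner_smul_left, smul_eq_mul, mul_neg, Finset.sum_neg_distrib]
    rw [hsum2]
    ring
  have hsum_eq : (∑' n : {n : Fin 3 → ℤ // n ≠ 0}, fDeriv L ξ N q x m n (x m))
      = (InnerProductSpace.toDual ℝ V3)
        ((-(2 * q m)) • ∑' n : {n : Fin 3 → ℤ // n ≠ 0}, wTerm L ξ N q x m n) := by
    have h1 : Summable fun n : {n : Fin 3 → ℤ // n ≠ 0} =>
        (-(2 * q m)) • wTerm L ξ N q x m n := hwsum.const_smul _
    have h2 := h1.map_tsum
      ((InnerProductSpace.toDual ℝ V3).toLinearIsometry.toLinearMap.toAddMonoidHom)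
      (InnerProductSpace.toDual ℝ V3).continuous
    calc (∑' n : {n : Fin 3 → ℤ // n ≠ 0}, fDeriv L ξ N q x m n (x m))
        = ∑' n : {n : Fin 3 → ℤ // n ≠ 0},
          ((InnerProductSpace.toDual ℝ V3).toLinearIsometry.toLinearMap.toAddMonoidHom)
            ((-(2 * q m)) • wTerm L ξ N q x m n) := tsum_congr fun n => hstep n
      _ = ((InnerProductSpace.toDual ℝ V3).toLinearIsometry.toLinearMap.toAddMonoidHom)
          ((-(2 * q m)) • ∑' n : {n : Fin 3 → ℤ // n ≠ 0}, wTerm L ξ N q x m n) := by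
          rw [Summable.tsum_const_smul (-(2 * q m)) hwsum] at h2
          exact h2.symm
      _ = (InnerProductSpace.toDual ℝ V3)
          ((-(2 * q m)) • ∑' n : {n : Fin 3 → ℤ // n ≠ 0}, wTerm L ξ N q x m n) := rfl
  have hTT : (∑' n : {n : Fin 3 → ℤ // n ≠ 0},
      ((Real.exp (-‖kvec L ↑n‖ ^ 2 / (4 * ξ ^ 2)) / ‖kvec L ↑n‖ ^ 2) *
        ∑ ν, q ν * Real.sin (⟪kvec L ↑n, x m - x ν⟫ : ℝ)) • kvec L ↑n)
      = ∑' n : {n : Fin 3 → ℤ // n ≠ 0}, wTerm L ξ N q x m n := rfl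
  have hmain := (hFD (x m)).const_mul (2 * π / L ^ 3)
  rw [hE, hTT]
  refine hmain.congr_fderiv (Eq.symm ?_)
  rw [hsum_eq]
  refine ContinuousLinearMap.ext fun v => ?_
  simp only [ContinuousLinearMap.smul_apply, InnerProductSpace.toDual_apply_apply,
    real_inner_smul_left, inner_neg_left, smul_eq_mul]
  ring

end
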